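/- Let G = (V, E) be a simple graph with |V| = n vertices, where n is even and n ≥ 6. Construct 2n points {p_v : v ∈ V} ∪ {q_v : v ∈ V}, paired as {p_v, q_v}, with distance function d given by: d(q_u, q_v) = 0 for all u ≠ v; d(p_u, q_v) = 2 for all u, v; d(p_u, p_v) = min(ρ_G(u, v), 4) for u ≠ v, where ρ_G is the shortest-path distance in G (with ρ_G(u,v) = ∞ if u, v are in different components); and d(x, x) = 0. Then V can be partitioned into two sets V_1, V_2 with |V_1| = |V_2| = n/2 such that the induced subgraphs G[V_1] and G[V_2] are both connected, if and only if there exists a feasible coloring of the 2n points into R and B with max(mstCost(R), mstCost(B)) ≤ n/2 + 1, where mstCost is computed with respect to d. -/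

import Mathlib

/-- Two points are connected via the edge set `E` (edges usable in both directions). -/
def EdgeConn {β : Type*} (E : Finset (β × β)) (x y : β) : Prop :=
  Relation.ReflTransGen (fun a b => (a, b) ∈ E ∨ (b, a) ∈ E) x y

/-- `E` is (the edge set of) a spanning tree of the complete graph on the finite
point set `X`. -/
def IsSpanningTreeOn {β : Type*} (X : Finset β) (E : Finset (β × β)) : Prop :=
  (∀ e ∈ E, e.1 ∈ X ∧ e.2 ∈ X) ∧ E.card + 1 = X.card ∧
    ∀ x ∈ X, ∀ y ∈ X, EdgeConn E x y

/-- The minimum total edge weight of a spanning tree on `X`, with respect to a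
given symmetric nonnegative distance function `d`. -/
noncomputable def mstCostD {β : Type*} (d : β → β → ℝ) (X : Finset β) : ℝ :=
  sInf {c | ∃ E : Finset (β × β), IsSpanningTreeOn X E ∧ c = ∑ e ∈ E, d e.1 e.2}

open Classical in
/-- The distance function of the reduction: points are `(v, false) = p_v` and
`(v, true) = q_v`; `d(q_u, q_v) = 0`, `d(p_u, q_v) = 2`, and
`d(p_u, p_v) = min (ρ_G(u,v)) 4` for `u ≠ v` (with `ρ_G(u,v) = ∞`, hence the
minimum `4`, when `u` and `v` lie in different components), `d(x,x) = 0`. -/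
noncomputable def reductionDist {V : Type*} (G : SimpleGraph V) :
    V × Bool → V × Bool → ℝ := fun x y =>
  if x = y then 0
  else if x.2 = true ∧ y.2 = true then 0
  else if x.2 ≠ y.2 then 2
  else min (if G.Reachable x.1 y.1 then (G.dist x.1 y.1 : ℝ) else 4) 4

open Finset

namespace MMR

variable {β γ : Type*}

lemma edgeconn_lift {E : Finset (β × β)} {C : Finset (γ × γ)} (f : β → γ)
    (hf : ∀ e ∈ E, f e.1 = f e.2 ∨ (f e.1, f e.2) ∈ C) :
    ∀ {x y : β}, EdgeConn E x y → EdgeConn C (f x) (f y) := by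
  intro x y h
  induction h with
  | refl => exact Relation.ReflTransGen.refl
  | @tail b c _ hbc ih =>
    rcases hbc with h1 | h1
    · rcases hf _ h1 with heq | hmem
      · exact heq ▸ ih
      · exact ih.tail (Or.inl hmem)
    · rcases hf _ h1 with heq | hmem
      · rw [show f c = f b from heq.symm ▸ rfl]; exact ih
      · exact ih.tail (Or.inr hmem)

lemma edgeconn_mono {E E' : Finset (β × β)} (h : E ⊆ E') {x y : β}
    (hxy : EdgeConn E x y) : EdgeConn E' x y := by
  have := edgeconn_lift (E := E) (C := E') id (fun e he => Or.inr (by simpa using h he)) hxy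
  simpa using this

lemma edgeconn_symm {E : Finset (β × β)} {x y : β}
    (h : EdgeConn E x y) : EdgeConn E y x :=
  by haveI : Std.Symm (fun a b : β => (a, b) ∈ E ∨ (b, a) ∈ E) := ⟨fun _ _ hab => hab.symm⟩
     exact (Relation.ReflTransGen.symmetric (r := fun a b : β => (a, b) ∈ E ∨ (b, a) ∈ E)).symm _ _ h

lemma edgeconn_single {E : Finset (β × β)} {x y : β} (h : (x, y) ∈ E) : EdgeConn E x y :=
  Relation.ReflTransGen.single (Or.inl h)

lemma exists_crossing {r : β → β → Prop} {W : Finset β} {x y : β}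
    (h : Relation.ReflTransGen r x y) (hx : x ∈ W) (hy : y ∉ W) :
    ∃ a b, a ∈ W ∧ b ∉ W ∧ r a b := by
  revert hy
  induction h with
  | refl => exact fun hy => absurd hx hy
  | @tail b c _ hbc ih =>
    intro hc
    by_cases hb : b ∈ W
    · exact ⟨b, c, hb, hc, hbc⟩
    · exact ih hb

lemma exists_ne_of_rtg {r : β → β → Prop} {x y : β}
    (h : Relation.ReflTransGen r x y) (hxy : x ≠ y) :
    ∃ a b, a ≠ b ∧ r a b := by
  revert hxy
  induction h with
  | refl => exact fun hxy => absurd rfl hxy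
  | @tail b c _ hbc ih =>
    intro hxc
    by_cases hb : b = c
    · exact ih (hb ▸ hxc)
    · exact ⟨b, c, hb, hbc⟩

lemma edgeconn_empty {x y : β} (h : EdgeConn (∅ : Finset (β × β)) x y) : x = y := by
  induction h with
  | refl => rfl
  | tail _ hbc ih => simp at hbc

lemma card_le_card_edges_add_one [DecidableEq γ] :
    ∀ (N : ℕ) (C : Finset (γ × γ)), C.card ≤ N →
      ∀ (Y : Finset γ), (∀ x ∈ Y, ∀ y ∈ Y, EdgeConn C x y) → Y.card ≤ C.card + 1 := by
  intro N
  induction N with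
  | zero =>
    intro C hC Y hY
    have hCe : C = ∅ := Finset.card_eq_zero.mp (Nat.le_zero.mp hC)
    subst hCe
    rcases Y.eq_empty_or_nonempty with rfl | ⟨x, hx⟩
    · simp
    · have : Y ⊆ {x} := fun y hy => Finset.mem_singleton.mpr (edgeconn_empty (hY y hy x hx))
      simpa using Finset.card_le_card this
  | succ N ih =>
    intro C hC Y hY
    by_cases h2 : Y.card ≤ 1
    · omega
    · obtain ⟨x, hx, y, hy, hxy⟩ := Finset.one_lt_card.mp (show 1 < Y.card by omega)
      obtain ⟨a, b, hab, hr⟩ := exists_ne_of_rtg (hY x hx y hy) hxy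
      obtain ⟨e, heC, hne⟩ : ∃ e ∈ C, e.1 ≠ e.2 := by
        rcases hr with h | h
        · exact ⟨(a, b), h, hab⟩
        · exact ⟨(b, a), h, fun hh => hab hh.symm⟩
      set g : γ → γ := fun z => if z = e.2 then e.1 else z with hg
      set C' : Finset (γ × γ) := (C.erase e).image (fun f => (g f.1, g f.2)) with hC'
      have hgC : ∀ f ∈ C, g f.1 = g f.2 ∨ (g f.1, g f.2) ∈ C' := by
        intro f hf
        by_cases hfe : f = e
        · left; subst hfe; simp [hg, hne]
        · right; exact Finset.mem_image_of_mem _ (Finset.mem_erase.mpr ⟨hfe, hf⟩)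
      have hC'card : C'.card ≤ N := by
        have h1 : C'.card ≤ (C.erase e).card := Finset.card_image_le
        have h2 : (C.erase e).card = C.card - 1 := Finset.card_erase_of_mem heC
        have h3 : 1 ≤ C.card := Finset.card_pos.mpr ⟨e, heC⟩
        omega
      have hconn' : ∀ x' ∈ Y.image g, ∀ y' ∈ Y.image g, EdgeConn C' x' y' := by
        intro x' hx' y' hy'
        obtain ⟨u, hu, rfl⟩ := Finset.mem_image.mp hx'
        obtain ⟨v, hv, rfl⟩ := Finset.mem_image.mp hy'
        exact edgeconn_lift g hgC (hY u hu v hv)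
      have hmain := ih C' hC'card (Y.image g) hconn'
      have hsub : Y.erase e.2 ⊆ Y.image g := by
        intro z hz
        obtain ⟨hz1, hz2⟩ := Finset.mem_erase.mp hz
        exact Finset.mem_image.mpr ⟨z, hz2, by simp [hg, hz1]⟩
      have h4 : (Y.erase e.2).card ≤ (Y.image g).card := Finset.card_le_card hsub
      have h5 : Y.card - 1 ≤ (Y.erase e.2).card := by
        by_cases he2 : e.2 ∈ Y
        · rw [Finset.card_erase_of_mem he2]
        · rw [Finset.erase_eq_of_notMem he2]; omega
      have h6 : C'.card ≤ C.card - 1 := by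
        have h1 : C'.card ≤ (C.erase e).card := Finset.card_image_le
        rw [Finset.card_erase_of_mem heC] at h1; exact h1
      have h7 : 1 ≤ C.card := Finset.card_pos.mpr ⟨e, heC⟩
      omega

lemma image_card_le [DecidableEq β] [DecidableEq γ] (X : Finset β) (E : Finset (β × β))
    (f : β → γ) (hconn : ∀ x ∈ X, ∀ y ∈ X, EdgeConn E x y) :
    (X.image f).card ≤ (E.filter (fun e => f e.1 ≠ f e.2)).card + 1 := by
  set C : Finset (γ × γ) := (E.filter (fun e => f e.1 ≠ f e.2)).image (fun e => (f e.1, f e.2))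
    with hCdef
  have hf : ∀ e ∈ E, f e.1 = f e.2 ∨ (f e.1, f e.2) ∈ C := by
    intro e he
    by_cases h : f e.1 = f e.2
    · exact Or.inl h
    · exact Or.inr (Finset.mem_image_of_mem _ (Finset.mem_filter.mpr ⟨he, h⟩))
  have hconn' : ∀ x ∈ X.image f, ∀ y ∈ X.image f, EdgeConn C x y := by
    intro x hx y hy
    obtain ⟨u, hu, rfl⟩ := Finset.mem_image.mp hx
    obtain ⟨v, hv, rfl⟩ := Finset.mem_image.mp hy
    exact edgeconn_lift f hf (hconn u hu v hv)
  have h1 := card_le_card_edges_add_one C.card C le_rfl (X.image f) hconn'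
  have h2 : C.card ≤ (E.filter (fun e => f e.1 ≠ f e.2)).card := Finset.card_image_le
  omega

lemma exists_tree_on [DecidableEq β] (X : Finset β) (hX : X.Nonempty) :
    ∃ E, IsSpanningTreeOn X E := by
  obtain ⟨x₀, hx₀⟩ := hX
  refine ⟨(X.erase x₀).image (fun y => (x₀, y)), ?_, ?_, ?_⟩
  · intro e he
    obtain ⟨y, hy, rfl⟩ := Finset.mem_image.mp he
    exact ⟨hx₀, Finset.mem_of_mem_erase hy⟩
  · rw [Finset.card_image_of_injective _ (fun a b h => (Prod.mk.injEq _ _ _ _).mp h |>.2),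
      Finset.card_erase_of_mem hx₀]
    have : 1 ≤ X.card := Finset.card_pos.mpr ⟨x₀, hx₀⟩
    omega
  · intro x hx y hy
    have key : ∀ z ∈ X, EdgeConn ((X.erase x₀).image (fun y => (x₀, y))) x₀ z := by
      intro z hz
      by_cases h : z = x₀
      · exact h ▸ Relation.ReflTransGen.refl
      · exact edgeconn_single (Finset.mem_image_of_mem _ (Finset.mem_erase.mpr ⟨h, hz⟩))
    exact (edgeconn_symm (key x hx)).trans (key y hy)

lemma mstCostD_le {β : Type*} (d : β → β → ℝ) (X : Finset β) (hd : ∀ x y, 0 ≤ d x y)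
    {E} (hE : IsSpanningTreeOn X E) : mstCostD d X ≤ ∑ e ∈ E, d e.1 e.2 :=
  csInf_le ⟨0, fun c ⟨E', _, hc⟩ => hc ▸ Finset.sum_nonneg fun e _ => hd _ _⟩ ⟨E, hE, rfl⟩

lemma le_mstCostD {β : Type*} [DecidableEq β] (d : β → β → ℝ) (X : Finset β)
    (hX : X.Nonempty) {c₀ : ℝ}
    (h : ∀ E, IsSpanningTreeOn X E → c₀ ≤ ∑ e ∈ E, d e.1 e.2) : c₀ ≤ mstCostD d X := by
  apply le_csInf
  · obtain ⟨E, hE⟩ := exists_tree_on X hX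
    exact ⟨_, E, hE, rfl⟩
  · rintro c ⟨E, hE, rfl⟩
    exact h E hE

end MMR

section Part2
open Finset MMR


namespace MMR

variable {V : Type*} {G : SimpleGraph V}

lemma d_nonneg (G : SimpleGraph V) (x y : V × Bool) : 0 ≤ reductionDist G x y := by
  unfold reductionDist
  split_ifs <;> try norm_num
  all_goals exact le_min (Nat.cast_nonneg _) (by norm_num)

lemma d_qq {u v : V} (h : u ≠ v) : reductionDist G (u, true) (v, true) = 0 := by
  unfold reductionDist
  rw [if_neg (by simp [h]), if_pos ⟨rfl, rfl⟩]

lemma d_ne_bool {x y : V × Bool} (h : x.2 ≠ y.2) : reductionDist G x y = 2 := by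
  unfold reductionDist
  have hxy : x ≠ y := fun he => h (he ▸ rfl)
  rw [if_neg hxy, if_neg (fun hh => h (hh.1.trans hh.2.symm)), if_pos h]

lemma d_pp_adj {u v : V} (h : G.Adj u v) :
    reductionDist G (u, false) (v, false) = 1 := by
  unfold reductionDist
  rw [if_neg (by simp [h.ne]), if_neg (by simp), if_neg (by simp),
    if_pos h.reachable, SimpleGraph.dist_eq_one_iff_adj.mpr h]
  norm_num

lemma d_pp_ge_one {u v : V} (h : u ≠ v) :
    (1 : ℝ) ≤ reductionDist G (u, false) (v, false) := by
  unfold reductionDist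
  rw [if_neg (by simp [h]), if_neg (by simp), if_neg (by simp)]
  apply le_min _ (by norm_num)
  split_ifs with hr
  · have := (hr.pos_dist_of_ne h)
    exact_mod_cast this
  · norm_num

lemma d_pp_ge_two {u v : V} (h : u ≠ v) (hadj : ¬ G.Adj u v) :
    (2 : ℝ) ≤ reductionDist G (u, false) (v, false) := by
  unfold reductionDist
  rw [if_neg (by simp [h]), if_neg (by simp), if_neg (by simp)]
  apply le_min _ (by norm_num)
  split_ifs with hr
  · have h1 : 0 < G.dist u v := hr.pos_dist_of_ne h
    have h2 : G.dist u v ≠ 1 := fun hh => hadj (SimpleGraph.dist_eq_one_iff_adj.mp hh)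
    have : 2 ≤ G.dist u v := by omega
    exact_mod_cast this
  · norm_num

/-- the restriction of adjacency to a finite vertex set -/
def rC (G : SimpleGraph V) (A : Finset V) : V → V → Prop :=
  fun a b => G.Adj a b ∧ a ∈ A ∧ b ∈ A

/-- connectivity within `A` -/
def RS (G : SimpleGraph V) (A : Finset V) : V → V → Prop :=
  Relation.ReflTransGen (rC G A)

lemma RS_symm {A : Finset V} : Symmetric (RS G A) :=
  by haveI : Std.Symm (rC G A) := ⟨fun _ _ h => ⟨h.1.symm, h.2.2, h.2.1⟩⟩
     exact fun _ _ h => (Relation.ReflTransGen.symmetric (r := rC G A)).symm _ _ h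

lemma RS_mem_right {A : Finset V} {u v : V} (h : RS G A u v) (hu : u ∈ A) : v ∈ A := by
  induction h with
  | refl => exact hu
  | tail _ hbc _ => exact hbc.2.2

open Classical in
noncomputable def comp (G : SimpleGraph V) [Fintype V] (A : Finset V) (v : V) : Finset V :=
  Finset.univ.filter (RS G A v)

lemma comp_eq [Fintype V] {A : Finset V} {u v : V} (h : RS G A u v) :
    comp G A u = comp G A v := by
  classical
  ext w
  simp only [comp, Finset.mem_filter, Finset.mem_univ, true_and]
  exact ⟨fun hw => (RS_symm h).trans hw, fun hw => h.trans hw⟩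

lemma comp_ne [Fintype V] {A : Finset V} {u v : V} (h : ¬ RS G A u v) :
    comp G A u ≠ comp G A v := by
  classical
  intro he
  have hv : v ∈ comp G A v := by
    simp only [comp, Finset.mem_filter]
    exact ⟨Finset.mem_univ v, Relation.ReflTransGen.refl⟩
  rw [← he] at hv
  simp only [comp, Finset.mem_filter] at hv
  exact h hv.2

lemma bridge1 (G : SimpleGraph V) (A : Finset V) {x y : ↥((A : Set V))}
    (h : (G.induce (A : Set V)).Reachable x y) : RS G A x.1 y.1 := by
  obtain ⟨w⟩ := h
  induction w with
  | nil => exact Relation.ReflTransGen.refl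
  | @cons a b c h p ih =>
    exact Relation.ReflTransGen.head ⟨h, Finset.mem_coe.mp a.2, Finset.mem_coe.mp b.2⟩ ih

lemma bridge2 {A : Finset V} {u v : V} (h : RS G A u v) :
    ∀ (hu : u ∈ (A : Set V)) (hv : v ∈ (A : Set V)),
      (G.induce (A : Set V)).Reachable ⟨u, hu⟩ ⟨v, hv⟩ := by
  induction h with
  | refl => intro hu hv; exact SimpleGraph.Reachable.refl _
  | @tail b c hub hbc ih =>
    intro hu hv
    have hb : b ∈ (A : Set V) := Finset.mem_coe.mpr hbc.2.1
    exact (ih hu hb).trans (SimpleGraph.Adj.reachable (by exact hbc.1))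

lemma exists_spanning_tree_rel [DecidableEq V] {Y : Finset V}
    (hY : Y.Nonempty)
    (hconn : ∀ x ∈ Y, ∀ y ∈ Y, RS G Y x y) :
    ∃ E : Finset (V × V), E.card + 1 = Y.card ∧ (∀ e ∈ E, rC G Y e.1 e.2) ∧
      ∀ x ∈ Y, ∀ y ∈ Y, EdgeConn E x y := by
  obtain ⟨x₀, hx₀⟩ := hY
  suffices h : ∀ m (W : Finset V) (E : Finset (V × V)), W ⊆ Y → x₀ ∈ W →
      (Y \ W).card = m → E.card + 1 = W.card → (∀ e ∈ E, rC G Y e.1 e.2) →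
      (∀ e ∈ E, e.1 ∈ W ∧ e.2 ∈ W) →
      (∀ x ∈ W, ∀ y ∈ W, EdgeConn E x y) →
      ∃ E' : Finset (V × V), E'.card + 1 = Y.card ∧ (∀ e ∈ E', rC G Y e.1 e.2) ∧
        ∀ x ∈ Y, ∀ y ∈ Y, EdgeConn E' x y by
    refine h (Y \ {x₀}).card {x₀} ∅ (by simpa using hx₀) (Finset.mem_singleton_self x₀)
      rfl (by simp) (by simp) (by simp) ?_
    intro x hx y hy
    rw [Finset.mem_singleton] at hx hy
    subst hx; subst hy
    exact Relation.ReflTransGen.refl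
  intro m
  induction m with
  | zero =>
    intro W E hWY hx hm hcard hr' hend hcn
    have hYW : Y = W :=
      Finset.Subset.antisymm (Finset.sdiff_eq_empty_iff_subset.mp (Finset.card_eq_zero.mp hm)) hWY
    exact ⟨E, by rw [hYW]; exact hcard, hr', by rw [hYW]; exact hcn⟩
  | succ m ih =>
    intro W E hWY hx hm hcard hr' hend hcn
    have hne : (Y \ W).Nonempty := Finset.card_pos.mp (by omega)
    obtain ⟨y, hy⟩ := hne
    rw [Finset.mem_sdiff] at hy
    obtain ⟨a, b, haW, hbW, hab⟩ := exists_crossing (hconn x₀ (hWY hx) y hy.1) hx hy.2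
    have hbY : b ∈ Y := hab.2.2
    have habE : (a, b) ∉ E := fun hh => hbW (hend _ hh).2
    have key : ∀ w ∈ W, EdgeConn (insert (a, b) E) w b := by
      intro w hw
      exact (edgeconn_mono (Finset.subset_insert _ _) (hcn w hw a haW)).trans
        (edgeconn_single (Finset.mem_insert_self _ _))
    refine ih (insert b W) (insert (a, b) E) ?_ ?_ ?_ ?_ ?_ ?_ ?_
    · exact Finset.insert_subset hbY hWY
    · exact Finset.mem_insert_of_mem hx
    · have : Y \ insert b W = (Y \ W).erase b := by
        ext z
        simp only [Finset.mem_sdiff, Finset.mem_insert, Finset.mem_erase]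
        tauto
      rw [this, Finset.card_erase_of_mem (Finset.mem_sdiff.mpr ⟨hbY, hbW⟩), hm]
      omega
    · rw [Finset.card_insert_of_notMem habE, Finset.card_insert_of_notMem hbW]
      omega
    · intro e he
      rcases Finset.mem_insert.mp he with rfl | he'
      · exact hab
      · exact hr' e he'
    · intro e he
      rcases Finset.mem_insert.mp he with rfl | he'
      · exact ⟨Finset.mem_insert_of_mem haW, Finset.mem_insert_self _ _⟩
      · exact ⟨Finset.mem_insert_of_mem (hend e he').1, Finset.mem_insert_of_mem (hend e he').2⟩
    · intro u hu v hv
      rcases Finset.mem_insert.mp hu with rfl | hu' <;>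
        rcases Finset.mem_insert.mp hv with rfl | hv'
      · exact Relation.ReflTransGen.refl
      · exact edgeconn_symm (key v hv')
      · exact key u hu'
      · exact edgeconn_mono (Finset.subset_insert _ _) (hcn u hu' v hv')

end MMR
end Part2

namespace MMR
section Part3
open Finset
variable {V : Type*} [Fintype V] [DecidableEq V] {G : SimpleGraph V}

lemma ub (G : SimpleGraph V) (A : Finset V) (hA : A.Nonempty)
    (hAc : (Finset.univ \ A).Nonempty)
    (hconn : ∀ u ∈ A, ∀ v ∈ A, RS G A u v) :
    mstCostD (reductionDist G) (Finset.univ.image (fun v => (v, (decide (v ∉ A))))) ≤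
      (A.card : ℝ) + 1 := by
  classical
  set X : Finset (V × Bool) := Finset.univ.image (fun v => (v, (decide (v ∉ A)))) with hX
  obtain ⟨T₁, hT₁card, hT₁r, hT₁conn⟩ := exists_spanning_tree_rel hA hconn
  obtain ⟨v₀, hv₀⟩ := hAc
  obtain ⟨u₀, hu₀⟩ := hA
  have hv₀' : v₀ ∉ A := (Finset.mem_sdiff.mp hv₀).2
  set E₁ : Finset ((V × Bool) × (V × Bool)) :=
    T₁.image (fun e => ((e.1, false), (e.2, false))) with hE₁
  set E₂ : Finset ((V × Bool) × (V × Bool)) :=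
    ((Finset.univ \ A).erase v₀).image (fun v => ((v₀, true), (v, true))) with hE₂
  set E₃ : Finset ((V × Bool) × (V × Bool)) := {((u₀, false), (v₀, true))} with hE₃
  have memXp : ∀ v ∈ A, (v, false) ∈ X := by
    intro v hv
    exact Finset.mem_image.mpr ⟨v, Finset.mem_univ v, by simp [hv]⟩
  have memXq : ∀ v, v ∉ A → (v, true) ∈ X := by
    intro v hv
    exact Finset.mem_image.mpr ⟨v, Finset.mem_univ v, by simp [hv]⟩
  have hXcard : X.card = Fintype.card V := by
    rw [hX, Finset.card_image_of_injective _ (fun a b h => congrArg Prod.fst h)]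
    exact Finset.card_univ
  have hcardA : 1 ≤ A.card := Finset.card_pos.mpr ⟨u₀, hu₀⟩
  have hcardAc : 1 ≤ (Finset.univ \ A).card := Finset.card_pos.mpr ⟨v₀, hv₀⟩
  have hcardsum : A.card + (Finset.univ \ A).card = Fintype.card V := by
    have hle := Finset.card_le_univ A
    rw [Finset.card_sdiff_of_subset (Finset.subset_univ A), Finset.card_univ]
    omega
  -- cards of pieces
  have hE₁card : E₁.card = T₁.card := by
    rw [hE₁]
    apply Finset.card_image_of_injective
    intro e f h
    simp only [Prod.mk.injEq] at h
    exact Prod.ext h.1.1 h.2.1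
  have hE₂card : E₂.card = (Finset.univ \ A).card - 1 := by
    rw [hE₂, Finset.card_image_of_injective _ (fun a b h => by
      simpa using (Prod.mk.injEq _ _ _ _).mp h |>.2), Finset.card_erase_of_mem hv₀]
  have hE₃card : E₃.card = 1 := rfl
  have hd12 : Disjoint E₁ E₂ := by
    rw [Finset.disjoint_left]
    rintro e he1 he2
    obtain ⟨f, _, rfl⟩ := Finset.mem_image.mp he1
    obtain ⟨v, _, hcontr⟩ := Finset.mem_image.mp he2
    simp at hcontr
  have hd13 : Disjoint (E₁ ∪ E₂) E₃ := by
    rw [Finset.disjoint_left]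
    rintro e he1 he3
    rw [hE₃, Finset.mem_singleton] at he3
    subst he3
    rcases Finset.mem_union.mp he1 with h | h
    · obtain ⟨f, _, hcontr⟩ := Finset.mem_image.mp h
      simp at hcontr
    · obtain ⟨v, _, hcontr⟩ := Finset.mem_image.mp h
      simp at hcontr
  set E : Finset ((V × Bool) × (V × Bool)) := (E₁ ∪ E₂) ∪ E₃ with hE
  have hT : IsSpanningTreeOn X E := by
    refine ⟨?_, ?_, ?_⟩
    · intro e he
      rcases Finset.mem_union.mp he with h | h
      · rcases Finset.mem_union.mp h with h1 | h1
        · obtain ⟨f, hf, rfl⟩ := Finset.mem_image.mp h1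
          exact ⟨memXp _ (hT₁r f hf).2.1, memXp _ (hT₁r f hf).2.2⟩
        · obtain ⟨v, hv, rfl⟩ := Finset.mem_image.mp h1
          exact ⟨memXq _ hv₀', memXq _ (Finset.mem_sdiff.mp (Finset.mem_of_mem_erase hv)).2⟩
      · rw [hE₃, Finset.mem_singleton] at h
        subst h
        exact ⟨memXp _ hu₀, memXq _ hv₀'⟩
    · rw [hE, Finset.card_union_of_disjoint hd13, Finset.card_union_of_disjoint hd12,
        hE₁card, hE₂card, hE₃card, hXcard]
      omega
    · -- connectivity
      have hpconn : ∀ v ∈ A, EdgeConn E (v, false) (u₀, false) := by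
        intro v hv
        have := edgeconn_lift (E := T₁) (C := E₁) (fun w => (w, false))
          (fun e he => Or.inr (Finset.mem_image_of_mem _ he)) (hT₁conn v hv u₀ hu₀)
        have hsub : E₁ ⊆ E := by
          intro z hz
          exact Finset.mem_union_left _ (Finset.mem_union_left _ hz)
        exact edgeconn_mono hsub this
      have hbridge : EdgeConn E (u₀, false) (v₀, true) :=
        edgeconn_single (Finset.mem_union_right _ (Finset.mem_singleton_self _))
      have hqconn : ∀ v, v ∉ A → EdgeConn E (v, true) (v₀, true) := by
        intro v hv
        by_cases hvv : v = v₀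
        · subst hvv; exact Relation.ReflTransGen.refl
        · apply edgeconn_symm
          apply edgeconn_single
          apply Finset.mem_union_left
          apply Finset.mem_union_right
          exact Finset.mem_image_of_mem _
            (Finset.mem_erase.mpr ⟨hvv, Finset.mem_sdiff.mpr ⟨Finset.mem_univ v, hv⟩⟩)
      have hall : ∀ x ∈ X, EdgeConn E x (v₀, true) := by
        intro x hx
        obtain ⟨v, _, rfl⟩ := Finset.mem_image.mp hx
        by_cases hv : v ∈ A
        · have h1 : (decide (v ∉ A)) = false := by simp [hv]
          rw [h1]
          exact ((hpconn v hv).trans hbridge)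
        · have h1 : (decide (v ∉ A)) = true := by simp [hv]
          rw [h1]
          exact hqconn v hv
      intro x hx y hy
      exact (hall x hx).trans (edgeconn_symm (hall y hy))
  -- cost
  have hcost : ∑ e ∈ E, reductionDist G e.1 e.2 = (A.card : ℝ) + 1 := by
    rw [hE, Finset.sum_union hd13, Finset.sum_union hd12]
    have hc1 : ∑ e ∈ E₁, reductionDist G e.1 e.2 = (A.card : ℝ) - 1 := by
      have hinj : ∀ a ∈ T₁, ∀ b ∈ T₁,
          ((a.1, false), (a.2, false)) = ((b.1, false), (b.2, false)) → a = b := by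
        intro a _ b _ h
        simp only [Prod.mk.injEq] at h
        exact Prod.ext h.1.1 h.2.1
      rw [hE₁, Finset.sum_image hinj]
      have : ∀ e ∈ T₁, reductionDist G (e.1, false) (e.2, false) = 1 := by
        intro e he
        exact d_pp_adj (hT₁r e he).1
      rw [Finset.sum_congr rfl this, Finset.sum_const, nsmul_eq_mul, mul_one]
      have : (T₁.card : ℝ) = (A.card : ℝ) - 1 := by
        have := hT₁card
        push_cast [← this]
        ring
      exact this
    have hc2 : ∑ e ∈ E₂, reductionDist G e.1 e.2 = 0 := by
      have hinj2 : ∀ a ∈ (Finset.univ \ A).erase v₀, ∀ b ∈ (Finset.univ \ A).erase v₀,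
          ((v₀, true), (a, true)) = ((v₀, true), (b, true)) → a = b := by
        intro a _ b _ h
        simpa using (Prod.mk.injEq _ _ _ _).mp h |>.2
      rw [hE₂, Finset.sum_image hinj2]
      apply Finset.sum_eq_zero
      intro v hv
      exact d_qq (fun h => (Finset.mem_erase.mp hv).1 h.symm)
    have hc3 : ∑ e ∈ E₃, reductionDist G e.1 e.2 = 2 := by
      rw [hE₃, Finset.sum_singleton]
      exact d_ne_bool (by simp)
    rw [hc1, hc2, hc3]
    ring
  calc mstCostD (reductionDist G) X ≤ ∑ e ∈ E, reductionDist G e.1 e.2 :=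
        mstCostD_le _ _ (d_nonneg G) hT
    _ = (A.card : ℝ) + 1 := hcost

end Part3
end MMR

namespace MMR
section Part4
open Finset
variable {V : Type*} [Fintype V] [DecidableEq V] {G : SimpleGraph V}

/-- the set of points selected by a coloring -/
def XS (σ : V → Bool) : Finset (V × Bool) :=
  Finset.univ.image (fun v => (v, σ v))

/-- the `p`-side of a coloring -/
def SS (σ : V → Bool) : Finset V := Finset.univ.filter (fun v => σ v = false)

/-- the `q`-side of a coloring -/
def TS (σ : V → Bool) : Finset V := Finset.univ.filter (fun v => σ v = true)

open Classical in
noncomputable def fOne (G : SimpleGraph V) (σ : V → Bool) : V × Bool → Option (Finset V) :=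
  fun z => if z.2 = true then none else some (comp G (SS σ) z.1)

def fTwo : V × Bool → Option V := fun z => if z.2 = true then none else some z.1

lemma fOne_q (σ : V → Bool) (v : V) : fOne G σ (v, true) = none := rfl

lemma fOne_p (σ : V → Bool) (v : V) :
    fOne G σ (v, false) = some (comp G (SS σ) v) := by
  simp [fOne]

lemma fTwo_q (v : V) : fTwo (v, true) = (none : Option V) := rfl

lemma fTwo_p (v : V) : fTwo (v, false) = some v := rfl

open Classical in
lemma pointwise (G : SimpleGraph V) (σ : V → Bool) {x y : V × Bool}
    (hx : x ∈ XS σ) (hy : y ∈ XS σ) :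
    (if fOne G σ x ≠ fOne G σ y then (1 : ℝ) else 0) +
      (if fTwo x ≠ fTwo y then (1 : ℝ) else 0) ≤ reductionDist G x y := by
  obtain ⟨u, -, rfl⟩ := Finset.mem_image.mp hx
  obtain ⟨v, -, rfl⟩ := Finset.mem_image.mp hy
  rcases hσu : σ u with _ | _ <;> rcases hσv : σ v with _ | _
  · -- both false : p-p
    by_cases huv : u = v
    · subst huv
      simp [reductionDist, d_nonneg]
    · have hne2 : fTwo ((u : V), false) ≠ fTwo ((v : V), false) := by
        rw [fTwo_p, fTwo_p]
        simp [huv]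
      rw [if_pos hne2]
      by_cases hc : comp G (SS σ) u = comp G (SS σ) v
      · have hne1 : ¬ (fOne G σ (u, false) ≠ fOne G σ (v, false)) := by
          rw [fOne_p, fOne_p, hc]
          simp
        rw [if_neg hne1]
        simpa using d_pp_ge_one (G := G) huv
      · have hne1 : fOne G σ (u, false) ≠ fOne G σ (v, false) := by
          rw [fOne_p, fOne_p]
          simpa using hc
        rw [if_pos hne1]
        have hadj : ¬ G.Adj u v := by
          intro had
          exact hc (comp_eq (Relation.ReflTransGen.single
            ⟨had, by simp [SS, hσu], by simp [SS, hσv]⟩))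
        have := d_pp_ge_two (G := G) huv hadj
        linarith
  · -- false, true : p-q
    have hd : reductionDist G ((u : V), false) ((v : V), true) = 2 := d_ne_bool (by simp)
    rw [hd]
    split_ifs <;> norm_num
  · -- true, false
    have hd : reductionDist G ((u : V), true) ((v : V), false) = 2 := d_ne_bool (by simp)
    rw [hd]
    split_ifs <;> norm_num
  · -- true true
    have h1 : ¬ (fOne G σ (u, true) ≠ fOne G σ (v, true)) := by simp [fOne_q]
    have h2 : ¬ (fTwo ((u : V), true) ≠ fTwo ((v : V), true)) := by simp [fTwo_q]
    rw [if_neg h1, if_neg h2]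
    simpa using d_nonneg G (u, true) (v, true)

open Classical in
lemma lb_core (G : SimpleGraph V) (σ : V → Bool) [Nonempty V] {L : ℕ}
    (hL : L + 2 ≤ ((XS σ).image (fOne G σ)).card + ((XS σ).image fTwo).card) :
    (L : ℝ) ≤ mstCostD (reductionDist G) (XS σ) := by
  apply le_mstCostD
  · exact ⟨(Classical.arbitrary V, σ (Classical.arbitrary V)),
      Finset.mem_image_of_mem _ (Finset.mem_univ _)⟩
  · intro E hE
    obtain ⟨hEX, hEcard, hEconn⟩ := hE
    have h1 := image_card_le (XS σ) E (fOne G σ) hEconn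
    have h2 := image_card_le (XS σ) E fTwo hEconn
    set N₁ := (E.filter (fun e => fOne G σ e.1 ≠ fOne G σ e.2)).card with hN₁
    set N₂ := (E.filter (fun e => fTwo e.1 ≠ fTwo e.2)).card with hN₂
    have hsum : (N₁ : ℝ) + (N₂ : ℝ) ≤ ∑ e ∈ E, reductionDist G e.1 e.2 := by
      have e1 : (N₁ : ℝ) = ∑ e ∈ E, (if fOne G σ e.1 ≠ fOne G σ e.2 then (1:ℝ) else 0) := by
        rw [Finset.sum_boole]
      have e2 : (N₂ : ℝ) = ∑ e ∈ E, (if fTwo e.1 ≠ fTwo e.2 then (1:ℝ) else 0) := by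
        rw [Finset.sum_boole]
      rw [e1, e2, ← Finset.sum_add_distrib]
      apply Finset.sum_le_sum
      intro e he
      exact pointwise G σ (hEX e he).1 (hEX e he).2
    have hLN : L ≤ N₁ + N₂ := by omega
    calc (L : ℝ) ≤ (N₁ : ℝ) + (N₂ : ℝ) := by exact_mod_cast hLN
      _ ≤ _ := hsum

-- counting lemmas
lemma c2_ge (G : SimpleGraph V) (σ : V → Bool) :
    (SS σ).card ≤ ((XS σ).image fTwo).card := by
  classical
  have hsub : (SS σ).image (fun v => (some v : Option V)) ⊆ (XS σ).image fTwo := by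
    intro o ho
    obtain ⟨v, hv, rfl⟩ := Finset.mem_image.mp ho
    refine Finset.mem_image.mpr ⟨(v, σ v), Finset.mem_image_of_mem _ (Finset.mem_univ v), ?_⟩
    have : σ v = false := (Finset.mem_filter.mp hv).2
    rw [this, fTwo_p]
  calc (SS σ).card = ((SS σ).image (fun v => (some v : Option V))).card :=
        (Finset.card_image_of_injective _ (Option.some_injective V)).symm
    _ ≤ _ := Finset.card_le_card hsub

lemma none_mem_c2 (G : SimpleGraph V) (σ : V → Bool) {t : V} (ht : t ∈ TS σ) :
    (none : Option V) ∈ (XS σ).image fTwo := by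
  refine Finset.mem_image.mpr ⟨(t, σ t), Finset.mem_image_of_mem _ (Finset.mem_univ t), ?_⟩
  have : σ t = true := (Finset.mem_filter.mp ht).2
  rw [this, fTwo_q]

lemma c2_ge' (G : SimpleGraph V) (σ : V → Bool) (hT : (TS σ).Nonempty) :
    (SS σ).card + 1 ≤ ((XS σ).image fTwo).card := by
  classical
  obtain ⟨t, ht⟩ := hT
  have hsub : insert (none : Option V) ((SS σ).image (fun v => (some v : Option V))) ⊆
      (XS σ).image fTwo := by
    intro o ho
    rcases Finset.mem_insert.mp ho with rfl | ho'
    · exact none_mem_c2 G σ ht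
    · obtain ⟨v, hv, rfl⟩ := Finset.mem_image.mp ho'
      refine Finset.mem_image.mpr ⟨(v, σ v), Finset.mem_image_of_mem _ (Finset.mem_univ v), ?_⟩
      have : σ v = false := (Finset.mem_filter.mp hv).2
      rw [this, fTwo_p]
  have hcard : (insert (none : Option V) ((SS σ).image (fun v => (some v : Option V)))).card
      = (SS σ).card + 1 := by
    rw [Finset.card_insert_of_notMem (by simp),
      Finset.card_image_of_injective _ (Option.some_injective V)]
  rw [← hcard]
  exact Finset.card_le_card hsub

lemma some_comp_mem_c1 (G : SimpleGraph V) (σ : V → Bool) {s : V} (hs : s ∈ SS σ) :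
    some (comp G (SS σ) s) ∈ (XS σ).image (fOne G σ) := by
  refine Finset.mem_image.mpr ⟨(s, σ s), Finset.mem_image_of_mem _ (Finset.mem_univ s), ?_⟩
  have : σ s = false := (Finset.mem_filter.mp hs).2
  rw [this, fOne_p]

lemma none_mem_c1 (G : SimpleGraph V) (σ : V → Bool) {t : V} (ht : t ∈ TS σ) :
    (none : Option (Finset V)) ∈ (XS σ).image (fOne G σ) := by
  refine Finset.mem_image.mpr ⟨(t, σ t), Finset.mem_image_of_mem _ (Finset.mem_univ t), ?_⟩
  have : σ t = true := (Finset.mem_filter.mp ht).2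
  rw [this, fOne_q]

lemma c1_ge1 (G : SimpleGraph V) (σ : V → Bool) [Nonempty V] :
    1 ≤ ((XS σ).image (fOne G σ)).card := by
  apply Finset.card_pos.mpr
  exact ⟨fOne G σ (Classical.arbitrary V, σ (Classical.arbitrary V)),
    Finset.mem_image_of_mem _ (Finset.mem_image_of_mem _ (Finset.mem_univ _))⟩

lemma c1_ge2 (G : SimpleGraph V) (σ : V → Bool) (hS : (SS σ).Nonempty)
    (hT : (TS σ).Nonempty) : 2 ≤ ((XS σ).image (fOne G σ)).card := by
  obtain ⟨s, hs⟩ := hS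
  obtain ⟨t, ht⟩ := hT
  apply Finset.one_lt_card.mpr
  exact ⟨none, none_mem_c1 G σ ht, some (comp G (SS σ) s), some_comp_mem_c1 G σ hs, by simp⟩

lemma c1_ge3 (G : SimpleGraph V) (σ : V → Bool) (hT : (TS σ).Nonempty)
    {u v : V} (hu : u ∈ SS σ) (hv : v ∈ SS σ) (hnr : ¬ RS G (SS σ) u v) :
    3 ≤ ((XS σ).image (fOne G σ)).card := by
  classical
  obtain ⟨t, ht⟩ := hT
  have hcne : comp G (SS σ) u ≠ comp G (SS σ) v := comp_ne hnr
  have hsub : ({none, some (comp G (SS σ) u), some (comp G (SS σ) v)} :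
      Finset (Option (Finset V))) ⊆ (XS σ).image (fOne G σ) := by
    intro z hz
    simp only [Finset.mem_insert, Finset.mem_singleton] at hz
    rcases hz with rfl | rfl | rfl
    · exact none_mem_c1 G σ ht
    · exact some_comp_mem_c1 G σ hu
    · exact some_comp_mem_c1 G σ hv
  have hcard : ({none, some (comp G (SS σ) u), some (comp G (SS σ) v)} :
      Finset (Option (Finset V))).card = 3 := by
    rw [Finset.card_insert_of_notMem (by simp), Finset.card_insert_of_notMem (by simp [hcne])]
    rfl
  rw [← hcard]
  exact Finset.card_le_card hsub

end Part4
end MMR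

section Main
open Finset MMR

namespace MMR
variable {V : Type*} [Fintype V] [DecidableEq V] {G : SimpleGraph V}

lemma conn_of_RS (G : SimpleGraph V) (A : Finset V) (hA : A.Nonempty)
    (h : ∀ u ∈ A, ∀ v ∈ A, RS G A u v) :
    (G.induce (A : Set V)).Connected := by
  rw [SimpleGraph.connected_iff]
  constructor
  · intro x y
    exact bridge2 (h x.1 (Finset.mem_coe.mp x.2) y.1 (Finset.mem_coe.mp y.2)) x.2 y.2
  · obtain ⟨a, ha⟩ := hA
    exact ⟨⟨a, Finset.mem_coe.mpr ha⟩⟩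

lemma sdiff_SS (σ : V → Bool) : Finset.univ \ SS σ = TS σ := by
  ext v
  simp only [Finset.mem_sdiff, Finset.mem_univ, true_and, SS, TS, Finset.mem_filter]
  cases h : σ v <;> simp

lemma SS_not (σ : V → Bool) : SS (fun v => !(σ v)) = TS σ := by
  ext v
  simp only [SS, TS, Finset.mem_filter, Finset.mem_univ, true_and]
  cases h : σ v <;> simp

lemma TS_not (σ : V → Bool) : TS (fun v => !(σ v)) = SS σ := by
  ext v
  simp only [SS, TS, Finset.mem_filter, Finset.mem_univ, true_and]
  cases h : σ v <;> simp

end MMR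


/-- For a simple graph `G` on `n` vertices (`n` even, `n ≥ 6`), `G` can be
partitioned into two connected induced subgraphs on `n/2` vertices each if and only if the
corresponding Min-Max 2-MST instance (on the `2n` points `V × Bool`, paired as
`{(v, false), (v, true)}`, with distances `reductionDist G`) admits a feasible coloring of
cost at most `n/2 + 1`. -/
theorem minmax_two_mst_reduction {V : Type*} [Fintype V] [DecidableEq V]
    (G : SimpleGraph V) (n : ℕ) (hn : n = Fintype.card V)
    (heven : Even n) (h6 : 6 ≤ n) :
    (∃ V₁ : Finset V, V₁.card = n / 2 ∧ (Finset.univ \ V₁).card = n / 2 ∧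
        (G.induce (V₁ : Set V)).Connected ∧
        (G.induce ((Finset.univ \ V₁ : Finset V) : Set V)).Connected) ↔
    (∃ σ : V → Bool,
      max (mstCostD (reductionDist G)
            (Finset.image (fun v => (v, σ v)) Finset.univ))
          (mstCostD (reductionDist G)
            (Finset.image (fun v => (v, !(σ v))) Finset.univ)) ≤
        ((n / 2 : ℕ) : ℝ) + 1) := by
  classical
  have hNV : Nonempty V := Fintype.card_pos_iff.mp (by omega)
  constructor
  · rintro ⟨V₁, hc1, hc2, hconn1, hconn2⟩
    refine ⟨fun v => decide (v ∉ V₁), ?_⟩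
    set V₂ := Finset.univ \ V₁ with hV₂
    have hV₁ne : V₁.Nonempty := Finset.card_pos.mp (by omega)
    have hV₂ne : V₂.Nonempty := Finset.card_pos.mp (by omega)
    have hrs1 : ∀ u ∈ V₁, ∀ v ∈ V₁, MMR.RS G V₁ u v := by
      intro u hu v hv
      exact MMR.bridge1 G V₁
        (hconn1.preconnected ⟨u, Finset.mem_coe.mpr hu⟩ ⟨v, Finset.mem_coe.mpr hv⟩)
    have hrs2 : ∀ u ∈ V₂, ∀ v ∈ V₂, MMR.RS G V₂ u v := by
      intro u hu v hv
      exact MMR.bridge1 G V₂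
        (hconn2.preconnected ⟨u, Finset.mem_coe.mpr hu⟩ ⟨v, Finset.mem_coe.mpr hv⟩)
    have hV₂c : (Finset.univ \ V₂).Nonempty := by
      rw [hV₂, Finset.sdiff_sdiff_self_left, Finset.univ_inter]
      exact hV₁ne
    have hub1 := MMR.ub G V₁ hV₁ne hV₂ne hrs1
    have hub2 := MMR.ub G V₂ hV₂ne hV₂c hrs2
    apply max_le
    · rw [hc1] at hub1
      exact hub1
    · rw [hc2] at hub2
      have himg : (Finset.image (fun v => (v, !(decide (v ∉ V₁)))) Finset.univ) =
          (Finset.image (fun v => (v, decide (v ∉ V₂))) Finset.univ) := by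
        apply Finset.image_congr
        intro v _
        show (v, !(decide (v ∉ V₁))) = (v, decide (v ∉ V₂))
        have hb : (!(decide (v ∉ V₁))) = decide (v ∉ V₂) := by
          by_cases h : v ∈ V₁ <;> simp [hV₂, h]
        rw [hb]
      rw [himg]
      exact hub2
  · rintro ⟨σ, hmax⟩
    have hR : mstCostD (reductionDist G) (MMR.XS σ) ≤ ((n / 2 : ℕ) : ℝ) + 1 :=
      (max_le_iff.mp hmax).1
    have hB : mstCostD (reductionDist G) (MMR.XS (fun v => !(σ v))) ≤ ((n / 2 : ℕ) : ℝ) + 1 :=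
      (max_le_iff.mp hmax).2
    -- generic side bound
    have side1 : ∀ τ : V → Bool,
        mstCostD (reductionDist G) (MMR.XS τ) ≤ ((n / 2 : ℕ) : ℝ) + 1 →
        (MMR.SS τ).card ≤ n / 2 := by
      intro τ h
      by_cases hT : (MMR.TS τ).Nonempty
      · by_cases hS : (MMR.SS τ).Nonempty
        · have hc1 := MMR.c1_ge2 G τ hS hT
          have hc2 := MMR.c2_ge' G τ hT
          have hlb := MMR.lb_core G τ (L := (MMR.SS τ).card + 1) (by omega)
          have hx : (((MMR.SS τ).card + 1 : ℕ) : ℝ) ≤ ((n / 2 + 1 : ℕ) : ℝ) := by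
            push_cast
            push_cast at hlb
            linarith [hlb.trans h]
          have : (MMR.SS τ).card + 1 ≤ n / 2 + 1 := by exact_mod_cast hx
          omega
        · rw [Finset.not_nonempty_iff_eq_empty] at hS
          rw [hS]
          simp
      · exfalso
        rw [Finset.not_nonempty_iff_eq_empty] at hT
        have hSall : MMR.SS τ = Finset.univ := by
          ext v
          simp only [MMR.SS, Finset.mem_filter, Finset.mem_univ, true_and]
          cases hv : τ v
          · simp
          · exfalso
            have : v ∈ MMR.TS τ := by simp [MMR.TS, hv]
            rw [hT] at this
            simp at this
        have hk : (MMR.SS τ).card = n := by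
          rw [hSall, Finset.card_univ, ← hn]
        have hc1 := MMR.c1_ge1 G τ
        have hc2 := MMR.c2_ge G τ
        have hlb := MMR.lb_core G τ (L := n - 1) (by omega)
        have hx : ((n - 1 : ℕ) : ℝ) ≤ ((n / 2 + 1 : ℕ) : ℝ) := by
          push_cast
          push_cast at hlb
          linarith [hlb.trans h]
        have : n - 1 ≤ n / 2 + 1 := by exact_mod_cast hx
        omega
    have side2 : ∀ τ : V → Bool,
        mstCostD (reductionDist G) (MMR.XS τ) ≤ ((n / 2 : ℕ) : ℝ) + 1 →
        (MMR.TS τ).Nonempty → (MMR.SS τ).card = n / 2 →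
        ∀ u ∈ MMR.SS τ, ∀ v ∈ MMR.SS τ, MMR.RS G (MMR.SS τ) u v := by
      intro τ h hT hk u hu v hv
      by_contra hnr
      have hc1 := MMR.c1_ge3 G τ hT hu hv hnr
      have hc2 := MMR.c2_ge' G τ hT
      have hlb := MMR.lb_core G τ (L := (MMR.SS τ).card + 2) (by omega)
      have hx : (((MMR.SS τ).card + 2 : ℕ) : ℝ) ≤ ((n / 2 + 1 : ℕ) : ℝ) := by
        push_cast
        push_cast at hlb
        linarith [hlb.trans h]
      have : (MMR.SS τ).card + 2 ≤ n / 2 + 1 := by exact_mod_cast hx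
      omega
    -- cardinalities
    have hST : (MMR.SS σ).card + (MMR.TS σ).card = n := by
      have := Finset.card_filter_add_card_filter_not
        (s := (Finset.univ : Finset V)) (p := fun v => σ v = false)
      have hTeq : MMR.TS σ = Finset.univ.filter (fun v => ¬ (σ v = false)) := by
        ext v
        simp only [MMR.TS, Finset.mem_filter, Finset.mem_univ, true_and]
        cases hv : σ v <;> simp
      rw [MMR.SS, hTeq]
      rw [Finset.card_univ] at this
      omega
    have h1 := side1 σ hR
    have h2 := side1 (fun v => !(σ v)) hB
    rw [MMR.SS_not] at h2
    have hkS : (MMR.SS σ).card = n / 2 := by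
      have h2' := heven
      obtain ⟨m, hm⟩ := h2'
      omega
    have hkT : (MMR.TS σ).card = n / 2 := by omega
    have hSne : (MMR.SS σ).Nonempty := Finset.card_pos.mp (by omega)
    have hTne : (MMR.TS σ).Nonempty := Finset.card_pos.mp (by omega)
    have hrsS := side2 σ hR hTne hkS
    have hrsT : ∀ u ∈ MMR.TS σ, ∀ v ∈ MMR.TS σ, MMR.RS G (MMR.TS σ) u v := by
      have := side2 (fun v => !(σ v)) hB (by rw [MMR.TS_not]; exact hSne)
        (by rw [MMR.SS_not]; exact hkT)
      rw [MMR.SS_not] at this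
      exact this
    refine ⟨MMR.SS σ, hkS, ?_, ?_, ?_⟩
    · rw [MMR.sdiff_SS]
      exact hkT
    · exact MMR.conn_of_RS G _ hSne hrsS
    · rw [MMR.sdiff_SS]
      exact MMR.conn_of_RS G _ hTne hrsT
end Main
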